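/- If T is a Fishburn tree with maximum label k, then treetops(T) has exactly k elements and the set of labels of nodes in treetops(T) equals [k]. -/
import Mathlib


inductive LTree where
  | nil : LTree
  | node : LTree → ℕ → LTree → LTree
deriving DecidableEq

namespace LTree

def size : LTree → ℕ
  | nil => 0
  | node L _ R => L.size + 1 + R.size

/-- The in-order sequence of labels. -/
def inorder : LTree → List ℕ
  | nil => []
  | node L r R => L.inorder ++ r :: R.inorder

/-- The maximum label (0 for the empty tree). -/
def maxL : LTree → ℕ
  | nil => 0
  | node L r R => max r (max L.maxL R.maxL)

/-- Weakly decreasing along every root-to-leaf path. -/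
def Decreasing : LTree → Prop
  | nil => True
  | node L r R => L.maxL ≤ r ∧ R.maxL ≤ r ∧ L.Decreasing ∧ R.Decreasing

/-- Strictly decreasing to the left: every label in a left subtree
is strictly smaller than the label of its parent. -/
def StrictLeft : LTree → Prop
  | nil => True
  | node L r R => L.maxL < r ∧ L.StrictLeft ∧ R.StrictLeft

/-- An endotree: decreasing, strictly decreasing to the left, labels in `[n]`. -/
def IsEndotree (T : LTree) : Prop :=
  T.Decreasing ∧ T.StrictLeft ∧ ∀ l ∈ T.inorder, 1 ≤ l ∧ l ≤ T.size

/-- A regular endotree: the set of labels equals `[k]` for some `k ≤ n`. -/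
def IsRegularEndotree (T : LTree) : Prop :=
  T.IsEndotree ∧ ∃ k ≤ T.size, ∀ l, l ∈ T.inorder ↔ (1 ≤ l ∧ l ≤ k)

end LTree

/-- An endofunction on `[n]`, identified with a word of length `n` over `[n]`. -/
def IsEndofun (x : List ℕ) : Prop := ∀ a ∈ x, 1 ≤ a ∧ a ≤ x.length

/-- A Cayley permutation: an endofunction whose image is `[k]` for some `k ≤ n`. -/
def IsCayley (x : List ℕ) : Prop :=
  IsEndofun x ∧ ∃ k ≤ x.length, ∀ j, j ∈ x ↔ (1 ≤ j ∧ j ≤ k)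

namespace LTree

/-- The list of (subtrees rooted at the) nodes of `T`, in in-order. -/
def nodes : LTree → List LTree
  | nil => []
  | node L r R => L.nodes ++ node L r R :: R.nodes

/-- Root label (0 for the empty tree). -/
def rootLabel : LTree → ℕ
  | nil => 0
  | node _ r _ => r

/-- Left subtree. -/
def leftT : LTree → LTree
  | nil => nil
  | node L _ _ => L

/-- Indices `i` (0-based) such that the `i`-th in-order node `v_{i+1}` is in
`treetops(T)`: either the first node or a node with nonempty left subtree. -/
def treetopsIdx (T : LTree) : Set ℕ :=
  {i | i < T.size ∧ (i = 0 ∨ (T.nodes.getD i nil).leftT ≠ nil)}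

/-- Indices `i` such that the label of the `i`-th in-order node does not occur
at any earlier in-order node. -/
def unseenIdx (T : LTree) : Set ℕ :=
  {i | i < T.size ∧
    ∀ j < i, (T.nodes.getD j nil).rootLabel ≠ (T.nodes.getD i nil).rootLabel}

/-- A Fishburn tree: a regular endotree with `treetops(T) = unseen(T)`. -/
def IsFishburnTree (T : LTree) : Prop :=
  T.IsRegularEndotree ∧ treetopsIdx T = unseenIdx T

end LTree


namespace LTree

theorem nodes_length (T : LTree) : T.nodes.length = T.size := by
  induction T with
  | nil => rfl
  | node L r R ihL ihR => simp [nodes, size, ihL, ihR]; omega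

theorem inorder_eq (T : LTree) : T.inorder = T.nodes.map rootLabel := by
  induction T with
  | nil => rfl
  | node L r R ihL ihR => simp [inorder, nodes, rootLabel, ihL, ihR]

theorem inorder_length (T : LTree) : T.inorder.length = T.size := by
  rw [inorder_eq, List.length_map, nodes_length]

theorem getD_label (T : LTree) (i : ℕ) :
    (T.nodes.getD i nil).rootLabel = T.inorder.getD i 0 := by
  rw [inorder_eq]
  rcases Nat.lt_or_ge i T.nodes.length with h | h
  · rw [List.getD_eq_getElem _ _ h, List.getD_eq_getElem _ _ (by simpa using h)]
    simp
  · rw [List.getD_eq_default _ _ h, List.getD_eq_default _ _ (by simpa using h)]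
    rfl

theorem le_maxL (T : LTree) : ∀ l ∈ T.inorder, l ≤ T.maxL := by
  induction T with
  | nil => simp [inorder]
  | node L r R ihL ihR =>
    intro l hl
    simp only [inorder, List.mem_append, List.mem_cons] at hl
    simp only [maxL, le_max_iff]
    rcases hl with h | h | h
    · exact Or.inr (Or.inl (ihL l h))
    · exact Or.inl (le_of_eq h)
    · exact Or.inr (Or.inr (ihR l h))

theorem maxL_le (T : LTree) (m : ℕ) (h : ∀ l ∈ T.inorder, l ≤ m) : T.maxL ≤ m := by
  induction T with
  | nil => exact Nat.zero_le m
  | node L r R ihL ihR =>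
    simp only [inorder, List.mem_append, List.mem_cons] at h
    simp only [maxL, max_le_iff]
    exact ⟨h r (Or.inr (Or.inl rfl)),
      ihL (fun l hl => h l (Or.inl hl)), ihR (fun l hl => h l (Or.inr (Or.inr hl)))⟩

end LTree

theorem indexOf_le_aux (a : ℕ) : ∀ (x : List ℕ) (j : ℕ), j < x.length → x.getD j 0 = a → x.idxOf a ≤ j := by
  intro x
  induction x with
  | nil => simp
  | cons b t ih =>
    intro j hj hg
    cases j with
    | zero =>
      simp only [List.getD_cons_zero] at hg
      simp [hg, List.idxOf_cons_self]
    | succ j =>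
      by_cases hb : b = a
      · simp [hb, List.idxOf_cons_self]
      · rw [List.idxOf_cons_ne _ hb]
        simp only [List.length_cons, Nat.succ_lt_succ_iff] at hj
        simp only [List.getD_cons_succ] at hg
        exact Nat.succ_le_succ (ih j hj hg)


/-- if `T` is a Fishburn tree with maximum label `k`, then
`treetops(T)` has exactly `k` elements and its set of labels is `[k]`. -/

theorem fishburn_treetops_labels (T : LTree) (h : T.IsFishburnTree) :
    (T.treetopsIdx).ncard = T.maxL ∧
      {l : ℕ | ∃ i ∈ T.treetopsIdx, T.inorder.getD i 0 = l} = Set.Icc 1 T.maxL := by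
  obtain ⟨⟨hend, k, hk_le, hk⟩, hset⟩ := h
  set x := T.inorder with hx
  have hmaxle : T.maxL ≤ k := LTree.maxL_le T k (fun l hl => ((hk l).1 hl).2)
  have hmax : T.maxL = k := by
    rcases Nat.eq_zero_or_pos k with h0 | hpos
    · omega
    · have hm : k ∈ x := (hk k).2 ⟨hpos, le_refl k⟩
      have := LTree.le_maxL T k hm
      omega
  have hlen : x.length = T.size := LTree.inorder_length T
  have hgi : ∀ l ∈ x, x.getD (x.idxOf l) 0 = l := by
    intro l hl
    rw [List.getD_eq_getElem x 0 (List.idxOf_lt_length_iff.2 hl)]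
    exact List.getElem_idxOf _
  have hS : T.treetopsIdx = (fun l => x.idxOf l) '' (Set.Icc 1 k) := by
    rw [hset]
    ext i
    simp only [LTree.unseenIdx, Set.mem_setOf_eq, Set.mem_image, Set.mem_Icc]
    constructor
    · rintro ⟨hi, hun⟩
      have hmem : x.getD i 0 ∈ x := by
        rw [List.getD_eq_getElem x 0 (by omega)]
        exact List.getElem_mem _
      refine ⟨x.getD i 0, (hk _).1 hmem, ?_⟩
      have h1 : x.idxOf (x.getD i 0) ≤ i := indexOf_le_aux _ x i (by omega) rfl
      rcases Nat.lt_or_ge (x.idxOf (x.getD i 0)) i with hlt | hge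
      · exfalso
        have h2 := hun _ hlt
        rw [LTree.getD_label, LTree.getD_label] at h2
        exact h2 (hgi _ hmem)
      · omega
    · rintro ⟨l, ⟨hl1, hlk⟩, rfl⟩
      have hmem : l ∈ x := (hk l).2 ⟨hl1, hlk⟩
      have hlt : x.idxOf l < x.length := List.idxOf_lt_length_iff.2 hmem
      refine ⟨by omega, fun j hj => ?_⟩
      rw [LTree.getD_label, LTree.getD_label, hgi _ hmem]
      intro hcon
      have := indexOf_le_aux l x j (by omega) hcon
      omega
  have hinj : Set.InjOn (fun l => x.idxOf l) (Set.Icc 1 k) := by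
    intro a ha b hb hab
    have hma : a ∈ x := (hk a).2 (Set.mem_Icc.1 ha)
    have hmb : b ∈ x := (hk b).2 (Set.mem_Icc.1 hb)
    have := hgi a hma
    rw [show x.idxOf a = x.idxOf b from hab, hgi b hmb] at this
    exact this.symm
  constructor
  · rw [hS, Set.ncard_image_of_injOn hinj, ← Finset.coe_Icc, Set.ncard_coe_finset,
      Nat.card_Icc, hmax]
    omega
  · rw [hmax, hS]
    ext l
    simp only [Set.mem_setOf_eq, Set.mem_image, Set.mem_Icc]
    constructor
    · rintro ⟨i, ⟨l', hl', rfl⟩, rfl⟩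
      rw [hgi l' ((hk l').2 (Set.mem_Icc.1 hl'))]
      exact Set.mem_Icc.1 hl'
    · intro hl
      have hmem : l ∈ x := (hk l).2 (Set.mem_Icc.1 hl)
      exact ⟨x.idxOf l, ⟨l, hl, rfl⟩, hgi l hmem⟩
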